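/- Let δ ∈ {−1,1}, α ≠ 0, β ≠ 0 with Ω := βδ + α ≠ 0, let F(x,μ) := (−β + h(x,μ))·(x−μ)·(δ + e₁(x,μ)) − (1 + g(x,μ))·x·(α + e₂(x,μ)) with e₁, e₂, g, h C¹ and vanishing at (0,0), and let x_ps : (−ε,ε) → ℝ be the C¹ family of zeros of F with x_ps(0) = 0 and x_ps'(0) = βδ/Ω. Then β·x_ps(μ)·(x_ps(μ) − μ)/μ² tends to −αβ²δ/Ω² as μ → 0 with μ ≠ 0. Consequently there is ε' > 0 such that for all 0 < |μ| < ε': if αδ < 0 then β·x_ps(μ)·(x_ps(μ) − μ) > 0, i.e. the point (x_ps(μ), 0) lies in the sliding region; and if αδ > 0 then β·x_ps(μ)·(x_ps(μ) − μ) < 0, i.e. the point lies in the crossing region. -/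

import Mathlib

/-- Membership dichotomy for the pseudo-equilibrium: the zero `x_ps(μ)` of the sliding
equation satisfies `β·x_ps(μ)·(x_ps(μ)−μ)/μ² → −αβ²δ/Ω²`, so for small `μ ≠ 0` the point
lies in the sliding region (`βx(x−μ) > 0`) iff `αδ < 0`, and in the crossing region
(`βx(x−μ) < 0`) iff `αδ > 0`. -/
theorem pseudo_equilibrium_sliding_crossing_dichotomy
    (δ α β : ℝ) (hδ : δ = -1 ∨ δ = 1) (hα : α ≠ 0) (hβ : β ≠ 0)
    (hΩ : β * δ + α ≠ 0)
    (e₁ e₂ g h : ℝ × ℝ → ℝ)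
    (he₁ : ContDiff ℝ 1 e₁) (he₂ : ContDiff ℝ 1 e₂)
    (hg : ContDiff ℝ 1 g) (hh : ContDiff ℝ 1 h)
    (he₁0 : e₁ (0, 0) = 0) (he₂0 : e₂ (0, 0) = 0)
    (hg0 : g (0, 0) = 0) (hh0 : h (0, 0) = 0)
    (F : ℝ → ℝ → ℝ)
    (hF : ∀ x μ : ℝ, F x μ =
      (-β + h (x, μ)) * (x - μ) * (δ + e₁ (x, μ))
        - (1 + g (x, μ)) * x * (α + e₂ (x, μ)))
    (ε : ℝ) (hε : 0 < ε) (x_ps : ℝ → ℝ)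
    (hxps : ContDiffOn ℝ 1 x_ps (Set.Ioo (-ε) ε))
    (hxps0 : x_ps 0 = 0)
    (hxps' : deriv x_ps 0 = β * δ / (β * δ + α))
    (hzero : ∀ μ : ℝ, |μ| < ε → F (x_ps μ) μ = 0) :
    Filter.Tendsto (fun μ : ℝ => β * x_ps μ * (x_ps μ - μ) / μ ^ 2)
      (nhdsWithin 0 {(0 : ℝ)}ᶜ)
      (nhds (-(α * β ^ 2 * δ) / (β * δ + α) ^ 2)) ∧
    ∃ ε' > 0, ∀ μ : ℝ, 0 < |μ| → |μ| < ε' →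
      (α * δ < 0 → 0 < β * x_ps μ * (x_ps μ - μ)) ∧
      (0 < α * δ → β * x_ps μ * (x_ps μ - μ) < 0) := by
  have h0mem : (0 : ℝ) ∈ Set.Ioo (-ε) ε := ⟨by linarith, hε⟩
  have hdiff : DifferentiableAt ℝ x_ps 0 :=
    (hxps.differentiableOn one_ne_zero).differentiableAt (isOpen_Ioo.mem_nhds h0mem)
  have hd : HasDerivAt x_ps (β * δ / (β * δ + α)) 0 := hxps' ▸ hdiff.hasDerivAt
  have hslope : Filter.Tendsto (fun μ : ℝ => x_ps μ / μ)
      (nhdsWithin 0 {(0 : ℝ)}ᶜ) (nhds (β * δ / (β * δ + α))) := by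
    have := hasDerivAt_iff_tendsto_slope.mp hd
    refine this.congr' ?_
    filter_upwards [self_mem_nhdsWithin] with μ hμ
    simp [slope_def_field, hxps0]
  set L := β * δ / (β * δ + α) with hL
  have hlim : Filter.Tendsto (fun μ : ℝ => β * x_ps μ * (x_ps μ - μ) / μ ^ 2)
      (nhdsWithin 0 {(0 : ℝ)}ᶜ) (nhds (-(α * β ^ 2 * δ) / (β * δ + α) ^ 2)) := by
    have key : Filter.Tendsto (fun μ : ℝ => β * (x_ps μ / μ) * (x_ps μ / μ - 1))
        (nhdsWithin 0 {(0 : ℝ)}ᶜ) (nhds (β * L * (L - 1))) :=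
      ((hslope.const_mul β).mul (hslope.sub tendsto_const_nhds))
    have heq : β * L * (L - 1) = -(α * β ^ 2 * δ) / (β * δ + α) ^ 2 := by
      rw [hL]
      field_simp
      ring
    rw [← heq]
    refine key.congr' ?_
    filter_upwards [self_mem_nhdsWithin] with μ hμ
    have hμ0 : μ ≠ 0 := hμ
    have hsq : (μ:ℝ) ^ 2 ≠ 0 := pow_ne_zero 2 hμ0
    field_simp
    try ring
    try exact Or.inl trivial
  refine ⟨hlim, ?_⟩
  have hδ2 : δ ^ 2 = 1 := by rcases hδ with h | h <;> simp [h]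
  have hαδ : α * δ ≠ 0 := by
    rcases hδ with h | h <;> simp [h, hα]
  have hval : -(α * β ^ 2 * δ) / (β * δ + α) ^ 2
      = -(α * δ) * (β ^ 2 / (β * δ + α) ^ 2) := by
    field_simp
  have hpos : (0:ℝ) < β ^ 2 / (β * δ + α) ^ 2 :=
    div_pos (by positivity) (by positivity)
  rcases lt_trichotomy (α * δ) 0 with hc | hc | hc
  · -- limit positive
    have hℓ : 0 < -(α * β ^ 2 * δ) / (β * δ + α) ^ 2 := by
      rw [hval]; exact mul_pos (by linarith) hpos
    have hev : ∀ᶠ μ in nhdsWithin 0 {(0:ℝ)}ᶜ,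
        0 < β * x_ps μ * (x_ps μ - μ) / μ ^ 2 :=
      hlim.eventually (eventually_gt_nhds hℓ)
    rw [Filter.eventually_iff, Metric.mem_nhdsWithin_iff] at hev
    obtain ⟨ε', hε', hev⟩ := hev
    refine ⟨ε', hε', fun μ hμ1 hμ2 => ?_⟩
    have hμ0 : μ ≠ 0 := by simpa [abs_pos] using hμ1
    have := hev ⟨by simpa [Real.dist_eq] using hμ2, by simpa using hμ0⟩
    rw [Set.mem_setOf_eq] at this
    constructor
    · intro _
      have hsq : (0:ℝ) < μ ^ 2 := by positivity
      have h3 := mul_pos this hsq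
      rwa [div_mul_cancel₀ _ (ne_of_gt hsq)] at h3
    · intro hcc; linarith
  · exact absurd hc hαδ
  · have hℓ : -(α * β ^ 2 * δ) / (β * δ + α) ^ 2 < 0 := by
      rw [hval]
      have : -(α * δ) < 0 := by linarith
      nlinarith
    have hev : ∀ᶠ μ in nhdsWithin 0 {(0:ℝ)}ᶜ,
        β * x_ps μ * (x_ps μ - μ) / μ ^ 2 < 0 :=
      hlim.eventually (eventually_lt_nhds hℓ)
    rw [Filter.eventually_iff, Metric.mem_nhdsWithin_iff] at hev
    obtain ⟨ε', hε', hev⟩ := hev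
    refine ⟨ε', hε', fun μ hμ1 hμ2 => ?_⟩
    have hμ0 : μ ≠ 0 := by simpa [abs_pos] using hμ1
    have := hev ⟨by simpa [Real.dist_eq] using hμ2, by simpa using hμ0⟩
    rw [Set.mem_setOf_eq] at this
    constructor
    · intro hcc; linarith
    · intro _
      have hsq : (0:ℝ) < μ ^ 2 := by positivity
      have h3 := mul_neg_of_neg_of_pos this hsq
      rwa [div_mul_cancel₀ _ (ne_of_gt hsq)] at h3
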